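/- Let N ≥ 1, γ ∈ (0,1/3), β > 0, p_{x,y} = min(β N^{2γ-1}/(x^γ y^γ), 1), and s₂(y) = (N/y)^{2γ} + (N/y)^γ. Then for every x ∈ {1,…,N}, T(x) := Σ_{y=1}^N p_{x,y} s₂(y) ≤ (2β/(1-3γ)) · (N/x)^γ. -/

import Mathlib

open Finset

lemma sum_rpow_neg_le (N : ℕ) (hN : 1 ≤ N) (a : ℝ) (ha0 : 0 < a) (ha1 : a < 1) :
    ∑ y ∈ Finset.Icc 1 N, (y:ℝ) ^ (-a) ≤ (N:ℝ) ^ (1-a) / (1-a) := by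
  have hN0 : (0:ℝ) < N := by exact_mod_cast Nat.lt_of_lt_of_le Nat.zero_lt_one hN
  have hanti : AntitoneOn (fun t : ℝ => t ^ (-a)) (Set.Icc ((1:ℕ):ℝ) ((N:ℕ):ℝ)) := by
    intro s hs t ht hst
    exact Real.rpow_le_rpow_of_nonpos (lt_of_lt_of_le one_pos (by exact_mod_cast hs.1)) hst
      (by linarith)
  have hint := AntitoneOn.sum_le_integral_Ico (f := fun t : ℝ => t ^ (-a)) hN hanti
  have hval : (∫ t in (1:ℕ)..(N:ℕ), (t:ℝ) ^ (-a)) = ((N:ℝ)^(1-a) - 1) / (1-a) := by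
    rw [integral_rpow (Or.inl (by linarith))]
    norm_num
    ring_nf
  have hsplit : ∑ y ∈ Finset.Icc 1 N, (y:ℝ) ^ (-a)
      = 1 + ∑ i ∈ Finset.Ico 1 N, ((i+1:ℕ):ℝ) ^ (-a) := by
    have h1 : ∑ i ∈ Finset.Ico 1 N, ((i+1:ℕ):ℝ) ^ (-a)
        = ∑ y ∈ Finset.Ico 2 (N+1), ((y:ℕ):ℝ) ^ (-a) := by
      rw [← Finset.sum_Ico_add (fun y : ℕ => ((y:ℕ):ℝ) ^ (-a)) 1 N 1]
      simp [add_comm]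
    rw [h1, ← Finset.Ico_add_one_right_eq_Icc,
      Finset.sum_eq_sum_Ico_succ_bot (by omega : 1 < N + 1) (fun y => ((y:ℕ):ℝ) ^ (-a))]
    norm_num
  have h1a : 0 < 1 - a := by linarith
  have hle : 1 ≤ 1 / (1-a) := by
    rw [le_div_iff₀ h1a]; linarith
  calc ∑ y ∈ Finset.Icc 1 N, (y:ℝ) ^ (-a)
      ≤ 1 + ((N:ℝ)^(1-a) - 1) / (1-a) := by rw [hsplit, ← hval]; gcongr
    _ ≤ (N:ℝ) ^ (1-a) / (1-a) := by
        have hge : (1:ℝ) ≤ (N:ℝ)^(1-a) := Real.one_le_rpow (by exact_mod_cast hN) h1a.le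
        rw [sub_div] at *
        linarith [hle]

theorem score_sum_bound (N : ℕ) (hN : 1 ≤ N) (γ β : ℝ) (hγ0 : 0 < γ) (hγ1 : γ < 1/3)
    (hβ : 0 < β) (x : ℕ) (hx : x ∈ Finset.Icc 1 N) :
    ∑ y ∈ Finset.Icc 1 N,
        min (β * (N : ℝ) ^ (2*γ - 1) / ((x : ℝ) ^ γ * (y : ℝ) ^ γ)) 1 *
          (((N : ℝ) / y) ^ (2*γ) + ((N : ℝ) / y) ^ γ)
      ≤ (2 * β / (1 - 3*γ)) * ((N : ℝ) / x) ^ γ := by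
  have hN0 : (0:ℝ) < N := by exact_mod_cast Nat.lt_of_lt_of_le Nat.zero_lt_one hN
  obtain ⟨hx1, hxN⟩ := Finset.mem_Icc.mp hx
  have hx0 : (0:ℝ) < x := by exact_mod_cast hx1
  have hxγ : (0:ℝ) < (x:ℝ)^γ := Real.rpow_pos_of_pos hx0 γ
  have h13 : 0 < 1 - 3*γ := by linarith
  have h12 : 0 < 1 - 2*γ := by linarith
  have step1 : ∀ y ∈ Finset.Icc 1 N,
      min (β * (N : ℝ) ^ (2*γ - 1) / ((x : ℝ) ^ γ * (y : ℝ) ^ γ)) 1 *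
          (((N : ℝ) / y) ^ (2*γ) + ((N : ℝ) / y) ^ γ)
      ≤ β * (N:ℝ)^(2*γ-1) / (x:ℝ)^γ *
          ((N:ℝ)^(2*γ) * (y:ℝ)^(-(3*γ)) + (N:ℝ)^γ * (y:ℝ)^(-(2*γ))) := by
    intro y hy
    obtain ⟨hy1, _⟩ := Finset.mem_Icc.mp hy
    have hy0 : (0:ℝ) < y := by exact_mod_cast hy1
    have hs : (0:ℝ) ≤ ((N : ℝ) / y) ^ (2*γ) + ((N : ℝ) / y) ^ γ := by positivity
    calc min (β * (N : ℝ) ^ (2*γ - 1) / ((x : ℝ) ^ γ * (y : ℝ) ^ γ)) 1 *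
          (((N : ℝ) / y) ^ (2*γ) + ((N : ℝ) / y) ^ γ)
        ≤ (β * (N : ℝ) ^ (2*γ - 1) / ((x : ℝ) ^ γ * (y : ℝ) ^ γ)) *
          (((N : ℝ) / y) ^ (2*γ) + ((N : ℝ) / y) ^ γ) :=
          mul_le_mul_of_nonneg_right (min_le_left _ _) hs
      _ = β * (N:ℝ)^(2*γ-1) / (x:ℝ)^γ *
          ((N:ℝ)^(2*γ) * (y:ℝ)^(-(3*γ)) + (N:ℝ)^γ * (y:ℝ)^(-(2*γ))) := by
          rw [Real.div_rpow hN0.le hy0.le, Real.div_rpow hN0.le hy0.le,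
            Real.rpow_neg hy0.le, Real.rpow_neg hy0.le]
          have e3 : (y:ℝ)^(3*γ) = (y:ℝ)^γ * (y:ℝ)^(2*γ) := by
            rw [← Real.rpow_add hy0]; ring_nf
          have e2 : (y:ℝ)^(2*γ) = (y:ℝ)^γ * (y:ℝ)^γ := by
            rw [← Real.rpow_add hy0]; ring_nf
          have h2 : (0:ℝ) < (y:ℝ)^(2*γ) := Real.rpow_pos_of_pos hy0 _
          have h3 : (0:ℝ) < (y:ℝ)^(3*γ) := Real.rpow_pos_of_pos hy0 _
          have h1 : (0:ℝ) < (y:ℝ)^γ := Real.rpow_pos_of_pos hy0 _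
          field_simp
          rw [mul_comm γ 3, e3, e2]; ring
  have hc : (0:ℝ) ≤ β * (N:ℝ)^(2*γ-1) / (x:ℝ)^γ := by positivity
  have hsum3 := sum_rpow_neg_le N hN (3*γ) (by linarith) (by linarith)
  have hsum2 := sum_rpow_neg_le N hN (2*γ) (by linarith) (by linarith)
  calc ∑ y ∈ Finset.Icc 1 N,
        min (β * (N : ℝ) ^ (2*γ - 1) / ((x : ℝ) ^ γ * (y : ℝ) ^ γ)) 1 *
          (((N : ℝ) / y) ^ (2*γ) + ((N : ℝ) / y) ^ γ)
      ≤ ∑ y ∈ Finset.Icc 1 N, β * (N:ℝ)^(2*γ-1) / (x:ℝ)^γ *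
          ((N:ℝ)^(2*γ) * (y:ℝ)^(-(3*γ)) + (N:ℝ)^γ * (y:ℝ)^(-(2*γ))) :=
        Finset.sum_le_sum step1
    _ = β * (N:ℝ)^(2*γ-1) / (x:ℝ)^γ *
          ((N:ℝ)^(2*γ) * ∑ y ∈ Finset.Icc 1 N, (y:ℝ)^(-(3*γ)) +
           (N:ℝ)^γ * ∑ y ∈ Finset.Icc 1 N, (y:ℝ)^(-(2*γ))) := by
        simp only [mul_add, ← mul_assoc, Finset.sum_add_distrib, ← Finset.mul_sum]
    _ ≤ β * (N:ℝ)^(2*γ-1) / (x:ℝ)^γ *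
          ((N:ℝ)^(2*γ) * ((N:ℝ)^(1-3*γ)/(1-3*γ)) +
           (N:ℝ)^γ * ((N:ℝ)^(1-2*γ)/(1-2*γ))) := by
        gcongr
    _ ≤ β * (N:ℝ)^(2*γ-1) / (x:ℝ)^γ *
          ((N:ℝ)^(2*γ) * ((N:ℝ)^(1-3*γ)/(1-3*γ)) +
           (N:ℝ)^γ * ((N:ℝ)^(1-2*γ)/(1-3*γ))) := by
        gcongr
        linarith
    _ = (2 * β / (1 - 3*γ)) * ((N : ℝ) / x) ^ γ := by
        rw [Real.div_rpow hN0.le hx0.le]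
        have e1 : (N:ℝ)^(2*γ-1) * ((N:ℝ)^(2*γ) * (N:ℝ)^(1-3*γ)) = (N:ℝ)^γ := by
          rw [← Real.rpow_add hN0, ← Real.rpow_add hN0]; ring_nf
        have e2 : (N:ℝ)^(2*γ-1) * ((N:ℝ)^γ * (N:ℝ)^(1-2*γ)) = (N:ℝ)^γ := by
          rw [← Real.rpow_add hN0, ← Real.rpow_add hN0]; ring_nf
        linear_combination (β / (x:ℝ)^γ / (1-3*γ)) * (e1 + e2)
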